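/- Tensor cut: if ⊩_B^L φ⊗ψ and φ⊎ψ ⊩_B^K χ, then ⊩_B^{L⊎K} χ. -/
import Mathlib


abbrev Atom := ℕ
abbrev ASeq := Multiset Atom × Atom
abbrev Box := Multiset ASeq
abbrev ARule := Multiset Box × Box × Atom
abbrev Base := Set ARule

/-- An atom `d` is persistent in `B` if there is a rule `⟨∅, S, d⟩ ∈ B` with `S` nonempty. -/
def Persistent (B : Base) (d : Atom) : Prop :=
  ∃ S : Box, S ≠ 0 ∧ ((0 : Multiset Box), S, d) ∈ B

/-- Atomic derivability in a base. -/
inductive Deriv (B : Base) : Multiset Atom → Atom → Prop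
  | ref (p : Atom) : Deriv B {p} p
  | app (S : Box) (p : Atom)
      (bc : List (Box × Multiset Atom))
      (dc : List (Atom × Multiset Atom))
      (hrule : ((↑(bc.map Prod.fst) : Multiset Box), S, p) ∈ B)
      (hpers : ∀ x ∈ dc, Persistent B x.1)
      (hbox : ∀ x ∈ bc, ∀ s ∈ x.1, Deriv B (x.2 + s.1) s.2)
      (hd : ∀ x ∈ dc, Deriv B x.2 x.1)
      (hS : ∀ s ∈ S, Deriv B ((↑(dc.map Prod.fst) : Multiset Atom) + s.1) s.2) :
      Deriv B ((bc.map Prod.snd).sum + (dc.map Prod.snd).sum) p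

/-- Formulas of intuitionistic linear logic. -/
inductive Fml : Type
  | atom : Atom → Fml
  | top : Fml
  | zero : Fml
  | one : Fml
  | limp : Fml → Fml → Fml
  | tens : Fml → Fml → Fml
  | wth : Fml → Fml → Fml
  | plus : Fml → Fml → Fml
  | bang : Fml → Fml
deriving DecidableEq

/-- The degree of a formula. -/
def deg : Fml → ℕ
  | .atom _ => 1
  | .top => 2
  | .zero => 2
  | .one => 2
  | .limp φ ψ => deg φ + deg ψ + 1
  | .tens φ ψ => deg φ + deg ψ + 1
  | .wth φ ψ => deg φ + deg ψ + 1
  | .plus φ ψ => deg φ + deg ψ + 1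
  | .bang φ => deg φ + 1

theorem one_le_deg (φ : Fml) : 1 ≤ deg φ := by
  cases φ <;> simp [deg] <;> omega

mutual
  /-- Support `⊩_B^L φ` (empty left-hand side). -/
  def Supp : Base → Multiset Atom → Fml → Prop
    | B, L, .atom p => Deriv B L p
    | _, _, .top => True
    | B, L, .zero => ∀ (K : Multiset Atom) (p : Atom), Supp B (L + K) (.atom p)
    | B, L, .one => ∀ C : Base, B ⊆ C → ∀ (K : Multiset Atom) (p : Atom),
        Supp C K (.atom p) → Supp C (L + K) (.atom p)
    | B, L, .limp φ ψ => SuppInf1 B L φ ψ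
    | B, L, .tens φ ψ => ∀ C : Base, B ⊆ C → ∀ (K : Multiset Atom) (p : Atom),
        SuppInf2 C K φ ψ (.atom p) → Supp C (L + K) (.atom p)
    | B, L, .wth φ ψ => Supp B L φ ∧ Supp B L ψ
    | B, L, .plus φ ψ => ∀ C : Base, B ⊆ C → ∀ (K : Multiset Atom) (p : Atom),
        SuppInf1 C K φ (.atom p) → SuppInf1 C K ψ (.atom p) → Supp C (L + K) (.atom p)
    | B, L, .bang φ => ∀ C : Base, B ⊆ C → ∀ (K : Multiset Atom) (p : Atom),
        (∀ D : Base, C ⊆ D → Supp D 0 φ → Supp D K (.atom p)) → Supp C (L + K) (.atom p)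
  termination_by B L φ => 2 * deg φ
  decreasing_by
    all_goals
      try simp only [deg]
      try have h1 := one_le_deg φ
      try have h2 := one_le_deg ψ
      try have h3 := one_le_deg χ
      try have h4 := one_le_deg α
      try have h5 := one_le_deg β
      omega

  /-- The (Inf) clause for a singleton context `{φ} ⊩_B^L χ`. -/
  def SuppInf1 : Base → Multiset Atom → Fml → Fml → Prop
    | B, L, .bang α, χ => ∀ C : Base, B ⊆ C → Supp C 0 α → Supp C L χ
    | B, L, φ, χ => ∀ C : Base, B ⊆ C → ∀ K : Multiset Atom,
        Supp C K φ → Supp C (L + K) χ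
  termination_by B L φ χ => 2 * (deg φ + deg χ) - 1
  decreasing_by
    all_goals
      try simp only [deg]
      try have h1 := one_le_deg φ
      try have h2 := one_le_deg ψ
      try have h3 := one_le_deg χ
      try have h4 := one_le_deg α
      try have h5 := one_le_deg β
      omega

  /-- The (Inf) clause for a two-element context `{φ, ψ} ⊩_B^L χ`. -/
  def SuppInf2 : Base → Multiset Atom → Fml → Fml → Fml → Prop
    | B, L, .bang α, .bang β, χ => ∀ C : Base, B ⊆ C →
        Supp C 0 α → Supp C 0 β → Supp C L χ
    | B, L, .bang α, ψ, χ => ∀ C : Base, B ⊆ C → ∀ K : Multiset Atom,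
        Supp C 0 α → Supp C K ψ → Supp C (L + K) χ
    | B, L, φ, .bang β, χ => ∀ C : Base, B ⊆ C → ∀ K : Multiset Atom,
        Supp C 0 β → Supp C K φ → Supp C (L + K) χ
    | B, L, φ, ψ, χ => ∀ C : Base, B ⊆ C → ∀ K₁ K₂ : Multiset Atom,
        Supp C K₁ φ → Supp C K₂ ψ → Supp C (L + K₁ + K₂) χ
  termination_by B L φ ψ χ => 2 * (deg φ + deg ψ + deg χ) - 1
  decreasing_by
    all_goals
      try simp only [deg]
      try have h1 := one_le_deg φ
      try have h2 := one_le_deg ψ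
      try have h3 := one_le_deg χ
      try have h4 := one_le_deg α
      try have h5 := one_le_deg β
      omega
end

/-- Is the formula a `!`-formula? -/
def isBang : Fml → Bool
  | .bang _ => true
  | _ => false

/-- Strip a top-level `!`. -/
def unbang : Fml → Fml
  | .bang φ => φ
  | φ => φ

/-- Support for a multiset of formulas: the `(⊎)` clause. -/
def SuppMS (B : Base) (L : Multiset Atom) (Γ : Multiset Fml) : Prop :=
  ∃ l : List (Fml × Multiset Atom), (↑(l.map Prod.fst) : Multiset Fml) = Γ ∧
    (l.map Prod.snd).sum = L ∧ ∀ x ∈ l, Supp B x.2 x.1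

/-- The official (Inf) clause: `Γ ⊩_B^L φ`, where `Γ = !Δ ⊎ Θ`. -/
def SuppSeq (B : Base) (L : Multiset Atom) (Γ : Multiset Fml) (φ : Fml) : Prop :=
  ∀ C : Base, B ⊆ C → ∀ K : Multiset Atom,
    SuppMS C 0 ((Γ.filter (fun ψ => isBang ψ = true)).map unbang) →
    SuppMS C K (Γ.filter (fun ψ => isBang ψ = false)) →
    Supp C (L + K) φ

/-- Validity of a sequent `(Γ : φ)`. -/
def Valid (Γ : Multiset Fml) (φ : Fml) : Prop :=
  ∀ B : Base, SuppSeq B 0 Γ φ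


theorem Deriv.mono {B C : Base} (hBC : B ⊆ C) {L : Multiset Atom} {p : Atom}
    (h : Deriv B L p) : Deriv C L p := by
  induction h with
  | ref p => exact .ref p
  | app S p bc dc hrule hpers hbox hd hS ih1 ih2 ih3 =>
    exact .app S p bc dc (hBC hrule)
      (fun x hx => (hpers x hx).imp (fun S hS => ⟨hS.1, hBC hS.2⟩))
      ih1 ih2 ih3

theorem SuppInf1.mono {B C : Base} {L : Multiset Atom} {φ χ : Fml} (hBC : B ⊆ C)
    (h : SuppInf1 B L φ χ) : SuppInf1 C L φ χ := by
  cases φ <;> simp only [SuppInf1] at h ⊢ <;> exact fun D hCD => h D (hBC.trans hCD)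

theorem SuppInf2.mono {B C : Base} {L : Multiset Atom} {φ ψ χ : Fml} (hBC : B ⊆ C)
    (h : SuppInf2 B L φ ψ χ) : SuppInf2 C L φ ψ χ := by
  cases φ <;> cases ψ <;> simp only [SuppInf2] at h ⊢ <;>
    exact fun D hCD => h D (hBC.trans hCD)

theorem Supp.mono {φ : Fml} : ∀ {B C : Base} {L : Multiset Atom}, B ⊆ C →
    Supp B L φ → Supp C L φ := by
  induction φ with
  | atom p => intro B C L h hs; simp only [Supp] at hs ⊢; exact Deriv.mono h hs
  | top => intro B C L h hs; simp only [Supp]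
  | zero => intro B C L h hs; simp only [Supp] at hs ⊢; exact fun K p => Deriv.mono h (hs K p)
  | one => intro B C L h hs; simp only [Supp] at hs ⊢; exact fun D hCD => hs D (h.trans hCD)
  | limp α β ihα ihβ => intro B C L h hs; simp only [Supp] at hs ⊢; exact SuppInf1.mono h hs
  | tens α β ihα ihβ => intro B C L h hs; simp only [Supp] at hs ⊢; exact fun D hCD => hs D (h.trans hCD)
  | wth α β ihα ihβ => intro B C L h hs; simp only [Supp] at hs ⊢; exact ⟨ihα h hs.1, ihβ h hs.2⟩
  | plus α β ihα ihβ => intro B C L h hs; simp only [Supp] at hs ⊢; exact fun D hCD => hs D (h.trans hCD)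
  | bang α ihα => intro B C L h hs; simp only [Supp] at hs ⊢; exact fun D hCD => hs D (h.trans hCD)

theorem suppMS_nil (C : Base) : SuppMS C 0 0 := ⟨[], by simp, by simp, by simp⟩

theorem suppMS_single (C : Base) (θ : Fml) (R : Multiset Atom) (h : Supp C R θ) :
    SuppMS C R {θ} :=
  ⟨[(θ, R)], by simp, by simp, by
    intro x hx; simp only [List.mem_singleton] at hx; subst hx; exact h⟩

theorem suppMS_pair (C : Base) (θ₁ θ₂ : Fml) (R₁ R₂ : Multiset Atom)
    (h1 : Supp C R₁ θ₁) (h2 : Supp C R₂ θ₂) : SuppMS C (R₁ + R₂) {θ₁, θ₂} :=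
  ⟨[(θ₁, R₁), (θ₂, R₂)], by
    simp only [List.map_cons, List.map_nil]; rfl, by simp, by
    intro x hx
    simp only [List.mem_cons, List.mem_singleton, List.not_mem_nil, or_false] at hx
    rcases hx with rfl | rfl
    · exact h1
    · exact h2⟩

theorem isBang_bang (α : Fml) : isBang (.bang α) = true := rfl
theorem unbang_bang (α : Fml) : unbang (.bang α) = α := rfl

theorem isBang_eq_false {ψ : Fml} (h : ∀ β : Fml, ψ = Fml.bang β → False) :
    isBang ψ = false := by
  cases ψ <;> simp [isBang] <;> exact h _ rfl

theorem keyBB {C : Base} {M : Multiset Atom} {α β : Fml} {p : Atom}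
    (h : SuppSeq C M {.bang α, .bang β} (.atom p)) :
    ∀ D : Base, C ⊆ D → Supp D 0 α → Supp D 0 β → Supp D M (.atom p) := by
  intro D hCD hα hβ
  simp only [SuppSeq, Multiset.insert_eq_cons, Multiset.filter_cons, Multiset.filter_singleton,
    isBang_bang, unbang_bang, if_true, if_false, Multiset.singleton_add, Multiset.map_cons,
    Multiset.map_singleton, Multiset.map_zero, zero_add, add_zero] at h
  have := h D hCD 0 (by simpa using suppMS_pair D α β 0 0 hα hβ) (suppMS_nil D)
  rwa [add_zero] at this

theorem keyBN {C : Base} {M : Multiset Atom} {α ψ : Fml} {p : Atom}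
    (hψ : isBang ψ = false) (h : SuppSeq C M {.bang α, ψ} (.atom p)) :
    ∀ D : Base, C ⊆ D → ∀ K : Multiset Atom,
      Supp D 0 α → Supp D K ψ → Supp D (M + K) (.atom p) := by
  intro D hCD K hα hg
  simp only [SuppSeq, Multiset.insert_eq_cons, Multiset.filter_cons, Multiset.filter_singleton,
    isBang_bang, unbang_bang, hψ, if_true, if_false, Multiset.singleton_add, Multiset.map_cons,
    Multiset.map_singleton, Multiset.map_zero, zero_add, add_zero] at h
  exact h D hCD K (suppMS_single D α 0 hα) (suppMS_single D ψ K hg)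

theorem keyNB {C : Base} {M : Multiset Atom} {φ β : Fml} {p : Atom}
    (hφ : isBang φ = false) (h : SuppSeq C M {φ, .bang β} (.atom p)) :
    ∀ D : Base, C ⊆ D → ∀ K : Multiset Atom,
      Supp D 0 β → Supp D K φ → Supp D (M + K) (.atom p) := by
  intro D hCD K hβ hf
  simp only [SuppSeq, Multiset.insert_eq_cons, Multiset.filter_cons, Multiset.filter_singleton,
    isBang_bang, unbang_bang, hφ, if_true, if_false, Multiset.singleton_add, Multiset.map_cons,
    Multiset.map_singleton, Multiset.map_zero, zero_add, add_zero] at h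
  exact h D hCD K (suppMS_single D β 0 hβ) (suppMS_single D φ K hf)

theorem keyNN {C : Base} {M : Multiset Atom} {φ ψ : Fml} {p : Atom}
    (hφ : isBang φ = false) (hψ : isBang ψ = false) (h : SuppSeq C M {φ, ψ} (.atom p)) :
    ∀ D : Base, C ⊆ D → ∀ K₁ K₂ : Multiset Atom,
      Supp D K₁ φ → Supp D K₂ ψ → Supp D (M + K₁ + K₂) (.atom p) := by
  intro D hCD K₁ K₂ hf hg
  simp only [SuppSeq, Multiset.insert_eq_cons, Multiset.filter_cons, Multiset.filter_singleton,
    hφ, hψ, if_true, if_false, Multiset.singleton_add, Multiset.map_cons,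
    Multiset.map_singleton, Multiset.map_zero, zero_add, add_zero] at h
  have := h D hCD (K₁ + K₂) (suppMS_nil D) (suppMS_pair D φ ψ K₁ K₂ hf hg)
  rwa [← add_assoc] at this

theorem key (C : Base) (M : Multiset Atom) (φ ψ : Fml) (p : Atom)
    (h : SuppSeq C M {φ, ψ} (.atom p)) : SuppInf2 C M φ ψ (.atom p) := by
  rw [SuppInf2.eq_def]
  split
  · exact keyBB h
  · rename_i hne
    exact keyBN (isBang_eq_false hne) h
  · rename_i hne
    exact keyNB (isBang_eq_false hne) h
  · rename_i hne1 hne2 hne3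
    exact keyNN (isBang_eq_false hne1) (isBang_eq_false hne2) h
theorem tensor_cut_aux (φ ψ χ : Fml) : ∀ (B : Base) (L K : Multiset Atom),
    Supp B L (.tens φ ψ) → SuppSeq B K {φ, ψ} χ → Supp B (L + K) χ := by
  induction χ with
  | atom p =>
    intro B L K h1 h2
    simp only [Supp] at h1 ⊢
    exact h1 B subset_rfl K p (key B K φ ψ p h2)
  | top => intro B L K h1 h2; simp only [Supp]
  | zero =>
    intro B L K h1 h2
    simp only [Supp] at h1 ⊢
    intro K₀ p
    have h2' : SuppSeq B (K + K₀) {φ, ψ} (.atom p) := by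
      intro D hBD K'' m1 m2
      have hh := h2 D hBD K'' m1 m2
      simp only [Supp] at hh ⊢
      have := hh K₀ p
      rwa [add_right_comm] at this
    have := h1 B subset_rfl (K + K₀) p (key _ _ _ _ _ h2')
    rwa [← add_assoc] at this
  | one =>
    intro B L K h1 h2
    simp only [Supp] at h1 ⊢
    intro C hBC K₀ p hp
    have h2' : SuppSeq C (K + K₀) {φ, ψ} (.atom p) := by
      intro D hCD K'' m1 m2
      have hh := h2 D (hBC.trans hCD) K'' m1 m2
      simp only [Supp] at hh ⊢
      have := hh D subset_rfl K₀ p (Deriv.mono hCD hp)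
      rwa [add_right_comm] at this
    have := h1 C hBC (K + K₀) p (key _ _ _ _ _ h2')
    rwa [← add_assoc] at this
  | limp α β ihα ihβ =>
    intro B L K h1 h2
    simp only [Supp]
    cases α <;> simp only [SuppInf1] <;>
      first
      | -- bang case
        (intro C hBC hα
         apply ihβ C L K (Supp.mono hBC h1)
         intro D hCD K'' m1 m2
         have hh := h2 D (hBC.trans hCD) K'' m1 m2
         simp only [Supp] at hh
         simp only [SuppInf1] at hh
         exact hh D subset_rfl (Supp.mono hCD hα))
      | -- non-bang case
        (intro C hBC K₀ hα
         rw [add_assoc]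
         apply ihβ C L (K + K₀) (Supp.mono hBC h1)
         intro D hCD K'' m1 m2
         have hh := h2 D (hBC.trans hCD) K'' m1 m2
         simp only [Supp] at hh
         simp only [SuppInf1] at hh
         have := hh D subset_rfl K₀ (Supp.mono hCD hα)
         rwa [add_right_comm] at this)
  | tens α β ihα ihβ =>
    intro B L K h1 h2
    simp only [Supp] at h1 ⊢
    intro C hBC K₀ p hinf
    have h2' : SuppSeq C (K + K₀) {φ, ψ} (.atom p) := by
      intro D hCD K'' m1 m2
      have hh := h2 D (hBC.trans hCD) K'' m1 m2
      simp only [Supp] at hh ⊢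
      have := hh D subset_rfl K₀ p (SuppInf2.mono hCD hinf)
      rwa [add_right_comm] at this
    have := h1 C hBC (K + K₀) p (key _ _ _ _ _ h2')
    rwa [← add_assoc] at this
  | wth α β ihα ihβ =>
    intro B L K h1 h2
    simp only [Supp]
    constructor
    · apply ihα B L K h1
      intro D hBD K'' m1 m2
      have hh := h2 D hBD K'' m1 m2
      simp only [Supp] at hh
      exact hh.1
    · apply ihβ B L K h1
      intro D hBD K'' m1 m2
      have hh := h2 D hBD K'' m1 m2
      simp only [Supp] at hh
      exact hh.2
  | plus α β ihα ihβ =>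
    intro B L K h1 h2
    simp only [Supp] at h1 ⊢
    intro C hBC K₀ p hα hβ
    have h2' : SuppSeq C (K + K₀) {φ, ψ} (.atom p) := by
      intro D hCD K'' m1 m2
      have hh := h2 D (hBC.trans hCD) K'' m1 m2
      simp only [Supp] at hh ⊢
      have := hh D subset_rfl K₀ p (SuppInf1.mono hCD hα) (SuppInf1.mono hCD hβ)
      rwa [add_right_comm] at this
    have := h1 C hBC (K + K₀) p (key _ _ _ _ _ h2')
    rwa [← add_assoc] at this
  | bang α ihα =>
    intro B L K h1 h2
    simp only [Supp] at h1 ⊢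
    intro C hBC K₀ p hyp
    have h2' : SuppSeq C (K + K₀) {φ, ψ} (.atom p) := by
      intro D hCD K'' m1 m2
      have hh := h2 D (hBC.trans hCD) K'' m1 m2
      simp only [Supp] at hh ⊢
      have := hh D subset_rfl K₀ p (fun E hDE hα => hyp E (hCD.trans hDE) hα)
      rwa [add_right_comm] at this
    have := h1 C hBC (K + K₀) p (key _ _ _ _ _ h2')
    rwa [← add_assoc] at this

theorem tensor_cut (B : Base) (L K : Multiset Atom) (φ ψ χ : Fml)
    (h1 : Supp B L (.tens φ ψ)) (h2 : SuppSeq B K {φ, ψ} χ) :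
    Supp B (L + K) χ := by
  exact tensor_cut_aux φ ψ χ B L K h1 h2
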